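/- Let Ω ⊊ ℝⁿ be open with 0 ∈ Ωᶜ, and suppose the complement Ωᶜ is a convex cone (i.e. closed under nonnegative scalar multiplication and convex). If x₀ ∈ Ω and y₀ ∈ ∂Ω satisfy d_Ω(x₀) = |x₀ − y₀|, then (−y₀ + Ω) ⊆ Ω and d_Ω(x₀ − y₀) = |x₀ − y₀|. -/
import Mathlib


open scoped Pointwise

/-- If `Ωᶜ` is a convex cone containing `0`, `x₀ ∈ Ω`, and `y₀ ∈ ∂Ω` realizes the distance
from `x₀` to `Ωᶜ`, then `-y₀ + Ω ⊆ Ω` and `d_Ω(x₀ - y₀) = |x₀ - y₀|`. -/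
theorem translate_subset_and_dist_of_convex_cone_complement (n : ℕ)
    (Ω : Set (EuclideanSpace ℝ (Fin n)))
    (hopen : IsOpen Ω) (hproper : Ω ≠ Set.univ)
    (h0 : (0 : EuclideanSpace ℝ (Fin n)) ∈ Ωᶜ)
    (hcone : ∀ t : ℝ, 0 < t → t • Ωᶜ = Ωᶜ) (hconv : Convex ℝ Ωᶜ)
    (x₀ y₀ : EuclideanSpace ℝ (Fin n)) (hx₀ : x₀ ∈ Ω) (hy₀ : y₀ ∈ frontier Ω)
    (hd : Metric.infDist x₀ Ωᶜ = ‖x₀ - y₀‖) :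
    (∀ z ∈ Ω, -y₀ + z ∈ Ω) ∧ Metric.infDist (x₀ - y₀) Ωᶜ = ‖x₀ - y₀‖ := by
  have hy₀c : y₀ ∈ Ωᶜ := by
    intro hy
    exact (hopen.frontier_eq ▸ hy₀).2 hy
  -- key: Ωᶜ is closed under adding y₀
  have key : ∀ w ∈ Ωᶜ, w + y₀ ∈ Ωᶜ := by
    intro w hw
    have hmid : (1/2 : ℝ) • w + (1/2 : ℝ) • y₀ ∈ Ωᶜ :=
      hconv hw hy₀c (by norm_num) (by norm_num) (by norm_num)
    have h2 : (2 : ℝ) • Ωᶜ = Ωᶜ := hcone 2 two_pos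
    rw [← h2]
    refine ⟨_, hmid, ?_⟩
    show (2:ℝ) • ((1/2 : ℝ) • w + (1/2 : ℝ) • y₀) = w + y₀
    module
  constructor
  · intro z hz
    by_contra hzc
    have : (-y₀ + z) + y₀ ∈ Ωᶜ := key _ hzc
    simp at this
    exact this hz
  · refine le_antisymm ?_ ?_
    · have := Metric.infDist_le_dist_of_mem (x := x₀ - y₀) h0
      simpa [dist_eq_norm] using this
    · by_contra hlt
      push_neg at hlt
      obtain ⟨w, hw, hwlt⟩ := (Metric.infDist_lt_iff ⟨0, h0⟩).mp hlt
      have h1 : Metric.infDist x₀ Ωᶜ ≤ dist x₀ (w + y₀) :=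
        Metric.infDist_le_dist_of_mem (key w hw)
      rw [hd] at h1
      have h2 : dist x₀ (w + y₀) = dist (x₀ - y₀) w := by
        rw [dist_eq_norm, dist_eq_norm]
        congr 1
        abel
      linarith [h2 ▸ h1]
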